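/- Let A ⊆ Λ²W* be a linear subspace with dim A ≤ 3 such that every ω ∈ A has rank at most 4. Then A is nonstable: there exist an integer s ∈ {1,2,3} and linear subspaces U ⊆ U' of W with dim U = s and dim U' = 6−s such that ω(u,u') = 0 for all ω ∈ A, u ∈ U, u' ∈ U'. -/

import Mathlib

open Matrix

noncomputable section

abbrev W : Type := Fin 6 → ℂ
abbrev Form : Type := Matrix (Fin 6) (Fin 6) ℂ

/-- The skew-symmetric bilinear form associated to a matrix: `ω(u,v) = uᵀ M v`. -/
def Form.apply (M : Form) (u v : W) : ℂ := u ⬝ᵥ M *ᵥ v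

/-- A matrix represents a skew-symmetric (alternating) bilinear form iff `Mᵀ = -M`. -/
def Form.IsSkew (M : Form) : Prop := Mᵀ = -M

/-- Standard basis vectors of `W` (also used as the dual basis of `W*`). -/
def e (i : Fin 6) : Fin 6 → ℂ := Pi.single i 1

/-- Wedge of two covectors: `(φ∧ψ)(u,u') = φ(u)ψ(u') − ψ(u)φ(u')`. -/
def wedge (φ ψ : Fin 6 → ℂ) : Form := vecMulVec φ ψ - vecMulVec ψ φ

/-- Kernel of the linear map `u ↦ ω(u,·)`, i.e. of `u ↦ Mᵀ u`. -/
def Form.kernel (M : Form) : Submodule ℂ W := LinearMap.ker (Matrix.mulVecLin Mᵀ)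

/-- The action of `g ∈ GL(W)` on forms: `(g·ω)(u,u') = ω(gu,gu')`, as a linear map on forms. -/
def actLin (g : Matrix (Fin 6) (Fin 6) ℂ) : Form →ₗ[ℂ] Form where
  toFun M := gᵀ * M * g
  map_add' M N := by simp [add_mul, mul_add]
  map_smul' c M := by simp [mul_smul_comm, smul_mul_assoc]

/-- The geometric criterion for non-stability (Theorem 2.3(2)). -/
def Nonstable (A : Submodule ℂ Form) : Prop :=
  ∃ s : ℕ, s ∈ ({1, 2, 3} : Set ℕ) ∧
    ∃ U U' : Submodule ℂ W, U ≤ U' ∧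
      Module.finrank ℂ U = s ∧ Module.finrank ℂ U' = 6 - s ∧
      ∀ M ∈ A, ∀ u ∈ U, ∀ u' ∈ U', Form.apply M u u' = 0

/-- The geometric criterion for non-semistability (Theorem 2.3(1)). -/
def NonSemistable (A : Submodule ℂ Form) : Prop :=
  ∃ s : ℕ, s ∈ ({1, 2, 3} : Set ℕ) ∧
    ∃ U U' : Submodule ℂ W, U ≤ U' ∧
      Module.finrank ℂ U = s ∧ Module.finrank ℂ U' = 7 - s ∧
      ∀ M ∈ A, ∀ u ∈ U, ∀ u' ∈ U', Form.apply M u u' = 0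

/-- The plane `π_g` of general type. -/
def pi_g : Submodule ℂ Form :=
  Submodule.span ℂ {wedge (e 0) (e 3) + wedge (e 1) (e 4),
    wedge (e 0) (e 5) + wedge (e 2) (e 4),
    wedge (e 1) (e 5) - wedge (e 2) (e 3)}


-- basic bilinearity lemmas
lemma apply_add_right (M : Form) (u v w : W) :
    Form.apply M u (v + w) = Form.apply M u v + Form.apply M u w := by
  simp [Form.apply, Matrix.mulVec_add, dotProduct_add]
lemma apply_smul_right (M : Form) (c : ℂ) (u v : W) :
    Form.apply M u (c • v) = c * Form.apply M u v := by
  simp [Form.apply, Matrix.mulVec_smul]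
lemma apply_add_left (M : Form) (u v w : W) :
    Form.apply M (u + v) w = Form.apply M u w + Form.apply M v w := by
  simp [Form.apply, add_dotProduct]
lemma apply_smul_left (M : Form) (c : ℂ) (u v : W) :
    Form.apply M (c • u) v = c * Form.apply M u v := by
  simp [Form.apply, smul_dotProduct]
lemma apply_addM (M N : Form) (u v : W) :
    Form.apply (M + N) u v = Form.apply M u v + Form.apply N u v := by
  simp [Form.apply, Matrix.add_mulVec, dotProduct_add]
lemma apply_smulM (c : ℂ) (M : Form) (u v : W) :
    Form.apply (c • M) u v = c * Form.apply M u v := by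
  simp [Form.apply, Matrix.smul_mulVec]
lemma apply_zeroM (u v : W) : Form.apply (0 : Form) u v = 0 := by
  simp [Form.apply]

lemma apply_eq_transpose (M : Form) (u v : W) : Form.apply M u v = (Mᵀ *ᵥ u) ⬝ᵥ v := by
  rw [Form.apply, Matrix.dotProduct_mulVec, Matrix.mulVec_transpose]

lemma skew_apply_swap {M : Form} (h : Form.IsSkew M) (u v : W) :
    Form.apply M u v = - Form.apply M v u := by
  rw [apply_eq_transpose, h]
  simp [Form.apply, Matrix.neg_mulVec, dotProduct_comm]

lemma skew_apply_self {M : Form} (h : Form.IsSkew M) (u : W) : Form.apply M u u = 0 := by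
  have h2 := skew_apply_swap h u u
  have : (2:ℂ) * Form.apply M u u = 0 := by linear_combination h2
  have h20 : (2:ℂ) ≠ 0 := by norm_num
  exact (mul_eq_zero.mp this).resolve_left h20

lemma apply_left_ker {M : Form} (h : Form.IsSkew M) {v : W} (hv : M *ᵥ v = 0) (u : W) :
    Form.apply M v u = 0 := by
  rw [apply_eq_transpose, h, Matrix.neg_mulVec, hv]
  simp
lemma apply_right_ker (M : Form) {v : W} (hv : M *ᵥ v = 0) (u : W) :
    Form.apply M u v = 0 := by
  rw [Form.apply, hv, dotProduct_zero]

-- solving one linear equation in 2 unknowns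
lemma solve2 (c0 c1 : ℂ) : ∃ y0 y1 : ℂ, ¬(y0 = 0 ∧ y1 = 0) ∧ c0 * y0 + c1 * y1 = 0 := by
  by_cases h : c0 = 0
  · exact ⟨1, 0, by simp, by simp [h]⟩
  · exact ⟨c1, -c0, fun hc => h (by simpa using hc.2), by ring⟩

-- root of a binary quadratic over ℂ
lemma quad_root (a b c : ℂ) : ∃ x0 x1 : ℂ, ¬(x0 = 0 ∧ x1 = 0) ∧
    a * x0^2 + b * x0 * x1 + c * x1^2 = 0 := by
  by_cases ha : a = 0
  · exact ⟨1, 0, by simp, by simp [ha]⟩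
  · obtain ⟨s, hs⟩ := IsAlgClosed.exists_pow_nat_eq (b^2 - 4*a*c) (n := 2) (by norm_num)
    refine ⟨-b + s, 2*a, fun hc => ha (by simpa using hc.2), ?_⟩
    linear_combination a * hs

-- every skew form of rank ≤ 4 has two "independent" kernel vectors
lemma ker_pair {M : Form} (hrk : M.rank ≤ 4) :
    ∃ a b : W, (∀ x0 x1 : ℂ, x0 • a + x1 • b = 0 → x0 = 0 ∧ x1 = 0) ∧
      M *ᵥ a = 0 ∧ M *ᵥ b = 0 := by
  set N := LinearMap.ker M.mulVecLin with hN
  have hrn : M.rank + Module.finrank ℂ N = 6 := by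
    have := LinearMap.finrank_range_add_finrank_ker M.mulVecLin
    simpa [Matrix.rank] using this
  have h2 : 2 ≤ Module.finrank ℂ N := by omega
  let bas := Module.finBasis ℂ N
  let i0 : Fin (Module.finrank ℂ N) := ⟨0, by omega⟩
  let i1 : Fin (Module.finrank ℂ N) := ⟨1, by omega⟩
  refine ⟨(bas i0 : W), (bas i1 : W), ?_, (bas i0).2, (bas i1).2⟩
  intro x0 x1 hx
  have hxN : x0 • bas i0 + x1 • bas i1 = (0 : N) := by
    apply Subtype.ext
    simpa using hx
  have hrepr := congrArg bas.repr hxN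
  rw [map_add] at hrepr; rw [_root_.map_smul, _root_.map_smul, bas.repr_self, bas.repr_self, map_zero] at hrepr
  have h01 : i0 ≠ i1 := by simp [i0, i1, Fin.ext_iff]
  constructor
  · have := congrArg (fun f => f i0) hrepr
    simpa [Finsupp.single_apply, h01, h01.symm] using this
  · have := congrArg (fun f => f i1) hrepr
    simpa [Finsupp.single_apply, h01, h01.symm] using this

lemma apply_comb (M : Form) (a b c d : W) (x0 x1 y0 y1 : ℂ) :
    Form.apply M (x0 • a + x1 • b) (y0 • c + y1 • d) =
      x0 * y0 * Form.apply M a c + x0 * y1 * Form.apply M a d +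
      x1 * y0 * Form.apply M b c + x1 * y1 * Form.apply M b d := by
  simp [apply_add_left, apply_add_right, apply_smul_left, apply_smul_right]; ring

lemma apply_comb_left (M : Form) (a b v : W) (x0 x1 : ℂ) :
    Form.apply M (x0 • a + x1 • b) v = x0 * Form.apply M a v + x1 * Form.apply M b v := by
  simp [apply_add_left, apply_smul_left]

lemma apply_comb_right (M : Form) (v a b : W) (x0 x1 : ℂ) :
    Form.apply M v (x0 • a + x1 • b) = x0 * Form.apply M v a + x1 * Form.apply M v b := by
  simp [apply_add_right, apply_smul_right]

lemma combo_ne {a b : W} (ind : ∀ x0 x1 : ℂ, x0 • a + x1 • b = 0 → x0 = 0 ∧ x1 = 0)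
    {x0 x1 : ℂ} (h : ¬(x0 = 0 ∧ x1 = 0)) : x0 • a + x1 • b ≠ 0 :=
  fun h0 => h (ind x0 x1 h0)

lemma combo_ker {M : Form} {a b : W} (ha : M *ᵥ a = 0) (hb : M *ᵥ b = 0) (x0 x1 : ℂ) :
    M *ᵥ (x0 • a + x1 • b) = 0 := by
  simp [Matrix.mulVec_add, Matrix.mulVec_smul, ha, hb]

lemma mulVec2_zero {A : Matrix (Fin 2) (Fin 2) ℂ} {z : Fin 2 → ℂ} (h : A *ᵥ z = 0) (i : Fin 2) :
    A i 0 * z 0 + A i 1 * z 1 = 0 := by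
  have := congrFun h i
  simpa [Matrix.mulVec, dotProduct, Fin.sum_univ_two] using this

lemma ne2 {z : Fin 2 → ℂ} (hz : z ≠ 0) : ¬(z 0 = 0 ∧ z 1 = 0) := by
  rintro ⟨h0, h1⟩
  exact hz (funext fun i => by fin_cases i <;> assumption)

lemma ker2 {a b c d : ℂ} (h : a * d - b * c = 0) :
    ∃ z0 z1 : ℂ, ¬(z0 = 0 ∧ z1 = 0) ∧ a * z0 + b * z1 = 0 ∧ c * z0 + d * z1 = 0 := by
  have hdet : (!![a, b; c, d] : Matrix (Fin 2) (Fin 2) ℂ).det = 0 := by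
    rw [Matrix.det_fin_two_of]; linear_combination h
  obtain ⟨z, hz, hzk⟩ := (Matrix.exists_mulVec_eq_zero_iff).mpr hdet
  refine ⟨z 0, z 1, ne2 hz, ?_, ?_⟩
  · simpa using mulVec2_zero hzk 0
  · simpa using mulVec2_zero hzk 1

/-- Construction of kernel vectors `v i ∈ ker (M i)` with the three cross vanishings. -/
lemma pack {M0 M1 M2 : Form} (h0 : M0.rank ≤ 4) (h1 : M1.rank ≤ 4) (h2 : M2.rank ≤ 4) :
    ∃ v0 v1 v2 : W, v0 ≠ 0 ∧ v1 ≠ 0 ∧ v2 ≠ 0 ∧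
      M0 *ᵥ v0 = 0 ∧ M1 *ᵥ v1 = 0 ∧ M2 *ᵥ v2 = 0 ∧
      Form.apply M0 v1 v2 = 0 ∧ Form.apply M1 v0 v2 = 0 ∧ Form.apply M2 v0 v1 = 0 := by
  obtain ⟨a0, b0, ind0, ka0, kb0⟩ := ker_pair h0
  obtain ⟨a1, b1, ind1, ka1, kb1⟩ := ker_pair h1
  obtain ⟨a2, b2, ind2, ka2, kb2⟩ := ker_pair h2
  set P := Form.apply M0 a1 a2 with hP
  set Q := Form.apply M0 a1 b2 with hQ
  set R := Form.apply M0 b1 a2 with hR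
  set S := Form.apply M0 b1 b2 with hS
  by_cases hdet : P * S - Q * R = 0
  · -- singular case: find v2 killing M0 on all of span(a1,b1)
    obtain ⟨y0, y1, hy, hrow0, hrow1⟩ := ker2 hdet
    set v2 := y0 • a2 + y1 • b2 with hv2
    have hv2ne : v2 ≠ 0 := combo_ne ind2 hy
    have hv2k : M2 *ᵥ v2 = 0 := combo_ker ka2 kb2 _ _
    have hM0a1 : Form.apply M0 a1 v2 = 0 := by
      rw [hv2, apply_comb_right]; linear_combination hrow0
    have hM0b1 : Form.apply M0 b1 v2 = 0 := by
      rw [hv2, apply_comb_right]; linear_combination hrow1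
    -- choose v0 with apply M1 v0 v2 = 0
    obtain ⟨z0, z1, hz, hzeq⟩ := solve2 (Form.apply M1 a0 v2) (Form.apply M1 b0 v2)
    set v0 := z0 • a0 + z1 • b0 with hv0
    have hv0ne : v0 ≠ 0 := combo_ne ind0 hz
    have hv0k : M0 *ᵥ v0 = 0 := combo_ker ka0 kb0 _ _
    have hM1v0 : Form.apply M1 v0 v2 = 0 := by
      rw [hv0, apply_comb_left]; linear_combination hzeq
    -- choose v1 with apply M2 v0 v1 = 0
    obtain ⟨w0, w1, hw, hweq⟩ := solve2 (Form.apply M2 v0 a1) (Form.apply M2 v0 b1)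
    set v1 := w0 • a1 + w1 • b1 with hv1
    have hv1ne : v1 ≠ 0 := combo_ne ind1 hw
    have hv1k : M1 *ᵥ v1 = 0 := combo_ker ka1 kb1 _ _
    have hM2v0 : Form.apply M2 v0 v1 = 0 := by
      rw [hv1, apply_comb_right]; linear_combination hweq
    have hM0v1 : Form.apply M0 v1 v2 = 0 := by
      rw [hv1, apply_comb_left, hM0a1, hM0b1]; ring
    exact ⟨v0, v1, v2, hv0ne, hv1ne, hv2ne, hv0k, hv1k, hv2k, hM0v1, hM1v0, hM2v0⟩
  · -- nonsingular case: quadratic in x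
    set J1 := Form.apply M1 a0 a2 with hJ1
    set J2 := Form.apply M1 a0 b2 with hJ2
    set J3 := Form.apply M1 b0 a2 with hJ3
    set J4 := Form.apply M1 b0 b2 with hJ4
    set H1 := Form.apply M2 a0 a1 with hH1
    set H2 := Form.apply M2 a0 b1 with hH2
    set H3 := Form.apply M2 b0 a1 with hH3
    set H4 := Form.apply M2 b0 b1 with hH4
    set F1 := -Q * J1 + P * J2 with hF1
    set F2 := -S * J1 + R * J2 with hF2
    set G1 := -Q * J3 + P * J4 with hG1
    set G2 := -S * J3 + R * J4 with hG2
    obtain ⟨x0, x1, hx, hq⟩ := quad_root (F1 * H3 - G1 * H1)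
      (F1 * H4 + F2 * H3 - G1 * H2 - G2 * H1) (F2 * H4 - G2 * H2)
    set c0 := P * x0 + R * x1 with hc0
    set c1 := Q * x0 + S * x1 with hc1
    set v1 := x0 • a1 + x1 • b1 with hv1
    set v2 := (-c1) • a2 + c0 • b2 with hv2
    have hv1ne : v1 ≠ 0 := combo_ne ind1 hx
    have hv1k : M1 *ᵥ v1 = 0 := combo_ker ka1 kb1 _ _
    have hv2k : M2 *ᵥ v2 = 0 := combo_ker ka2 kb2 _ _
    have hv2ne : v2 ≠ 0 := by
      apply combo_ne ind2
      rintro ⟨hcc1, hcc0⟩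
      have hc1z : c1 = 0 := by linear_combination -hcc1
      apply hx
      constructor
      · have : (P * S - Q * R) * x0 = S * c0 - R * c1 := by rw [hc0, hc1]; ring
        rw [hcc0, hc1z] at this
        have h' : (P * S - Q * R) * x0 = 0 := by rw [this]; ring
        exact (mul_eq_zero.mp h').resolve_left hdet
      · have : (P * S - Q * R) * x1 = -Q * c0 + P * c1 := by rw [hc0, hc1]; ring
        rw [hcc0, hc1z] at this
        have h' : (P * S - Q * R) * x1 = 0 := by rw [this]; ring
        exact (mul_eq_zero.mp h').resolve_left hdet
    have hM0v1v2 : Form.apply M0 v1 v2 = 0 := by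
      rw [hv1, hv2, apply_comb, ← hP, ← hQ, ← hR, ← hS, hc0, hc1]; ring
    -- the two linear conditions on v0
    have hF : Form.apply M1 a0 v2 = x0 * F1 + x1 * F2 := by
      rw [hv2, apply_comb_right, ← hJ1, ← hJ2, hF1, hF2, hc0, hc1]; ring
    have hG : Form.apply M1 b0 v2 = x0 * G1 + x1 * G2 := by
      rw [hv2, apply_comb_right, ← hJ3, ← hJ4, hG1, hG2, hc0, hc1]; ring
    have hH : Form.apply M2 a0 v1 = x0 * H1 + x1 * H2 := by
      rw [hv1, apply_comb_right, ← hH1, ← hH2]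
    have hI : Form.apply M2 b0 v1 = x0 * H3 + x1 * H4 := by
      rw [hv1, apply_comb_right, ← hH3, ← hH4]
    have hdet2 : Form.apply M1 a0 v2 * Form.apply M2 b0 v1
        - Form.apply M1 b0 v2 * Form.apply M2 a0 v1 = 0 := by
      rw [hF, hG, hH, hI]; linear_combination hq
    obtain ⟨z0, z1, hz, hr0, hr1⟩ := ker2 hdet2
    set v0 := z0 • a0 + z1 • b0 with hv0
    have hv0ne : v0 ≠ 0 := combo_ne ind0 hz
    have hv0k : M0 *ᵥ v0 = 0 := combo_ker ka0 kb0 _ _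
    have hM1v0 : Form.apply M1 v0 v2 = 0 := by
      rw [hv0, apply_comb_left]; linear_combination hr0
    have hM2v0 : Form.apply M2 v0 v1 = 0 := by
      rw [hv0, apply_comb_left]; linear_combination hr1
    exact ⟨v0, v1, v2, hv0ne, hv1ne, hv2ne, hv0k, hv1k, hv2k, hM0v1v2, hM1v0, hM2v0⟩

lemma apply_zero_right (M : Form) (u : W) : Form.apply M u 0 = 0 := by
  simp [Form.apply]
lemma apply_zero_left (M : Form) (u : W) : Form.apply M 0 u = 0 := by
  simp [Form.apply]

/-- vanishing extends bilinearly to spans. -/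
lemma vanish_span {N : Form} {s : Set W}
    (h : ∀ x ∈ s, ∀ y ∈ s, Form.apply N x y = 0) :
    ∀ x ∈ Submodule.span ℂ s, ∀ y ∈ Submodule.span ℂ s, Form.apply N x y = 0 := by
  have step1 : ∀ x ∈ s, ∀ y ∈ Submodule.span ℂ s, Form.apply N x y = 0 := by
    intro x hx y hy
    induction hy using Submodule.span_induction with
    | mem z hz => exact h x hx z hz
    | zero => exact apply_zero_right N x
    | add a b _ _ ha hb => rw [apply_add_right, ha, hb, add_zero]
    | smul c a _ ha => rw [apply_smul_right, ha, mul_zero]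
  intro x hx y hy
  induction hx using Submodule.span_induction with
  | mem z hz => exact step1 z hz y hy
  | zero => exact apply_zero_left N y
  | add a b _ _ ha hb => rw [apply_add_left, ha, hb, add_zero]
  | smul c a _ ha => rw [apply_smul_left, ha, mul_zero]

/-- vanishing extends linearly over a span of forms. -/
lemma vanish_form_span {s : Set Form} {x y : W}
    (h : ∀ N ∈ s, Form.apply N x y = 0) :
    ∀ M ∈ Submodule.span ℂ s, Form.apply M x y = 0 := by
  intro M hM
  induction hM using Submodule.span_induction with
  | mem N hN => exact h N hN
  | zero => exact apply_zeroM x y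
  | add a b _ _ ha hb => rw [apply_addM, ha, hb, add_zero]
  | smul c a _ ha => rw [apply_smulM, ha, mul_zero]

/-- a common isotropic 3-space gives nonstability (s = 3). -/
lemma nonstable_of_isotropic3 (M0 M1 M2 : Form) (u : Fin 3 → W)
    (hLI : LinearIndependent ℂ u)
    (hvan : ∀ N ∈ ({M0, M1, M2} : Set Form), ∀ x ∈ Set.range u, ∀ y ∈ Set.range u,
      Form.apply N x y = 0) :
    Nonstable (Submodule.span ℂ {M0, M1, M2}) := by
  refine ⟨3, by simp, Submodule.span ℂ (Set.range u), Submodule.span ℂ (Set.range u),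
    le_rfl, ?_, ?_, ?_⟩
  · simpa using finrank_span_eq_card hLI
  · simpa using finrank_span_eq_card hLI
  · intro M hM x hx y hy
    refine vanish_form_span (fun N hN => ?_) M hM
    exact vanish_span (hvan N hN) x hx y hy

/-- a common kernel vector gives nonstability (s = 1). -/
lemma nonstable_of_common_kernel (M0 M1 M2 : Form)
    (hs0 : M0.IsSkew) (hs1 : M1.IsSkew) (hs2 : M2.IsSkew)
    {v : W} (hv : v ≠ 0) (hk0 : M0 *ᵥ v = 0) (hk1 : M1 *ᵥ v = 0) (hk2 : M2 *ᵥ v = 0) :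
    Nonstable (Submodule.span ℂ {M0, M1, M2}) := by
  obtain ⟨i, hi⟩ := Function.ne_iff.mp hv
  have hi' : v i ≠ 0 := by simpa using hi
  set j : Fin 6 := if i = 0 then 1 else 0 with hj
  have hij : j ≠ i := by
    rcases eq_or_ne i 0 with h | h
    · subst h; simp [hj]
    · simpa [hj, h] using Ne.symm h
  set f : W →ₗ[ℂ] ℂ := v i • (LinearMap.proj j) - v j • (LinearMap.proj i) with hf
  have hfv : f v = 0 := by simp [hf, mul_comm]
  have hfw : f ((Pi.single j 1 : W)) = v i := by
    simp [hf, Pi.single_apply, hij, hij.symm]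
  have hsurj : Function.Surjective f := by
    intro z
    refine ⟨(z * (v i)⁻¹) • (Pi.single j 1 : W), ?_⟩
    rw [f.map_smul, hfw]
    field_simp
    rw [smul_eq_mul]; exact div_mul_cancel₀ z hi'
  have hker : Module.finrank ℂ (LinearMap.ker f) = 5 := by
    have h1 := LinearMap.finrank_range_add_finrank_ker f
    rw [LinearMap.range_eq_top.mpr hsurj] at h1
    simp only [finrank_top, Module.finrank_self] at h1
    have h6 : Module.finrank ℂ W = 6 := by simp
    omega
  refine ⟨1, by simp, Submodule.span ℂ {v}, LinearMap.ker f, ?_, ?_, ?_, ?_⟩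
  · rw [Submodule.span_le]; intro x hx
    rw [Set.mem_singleton_iff] at hx
    subst hx
    exact hfv
  · exact finrank_span_singleton hv
  · rw [hker]
  · intro M hM x hx y _
    obtain ⟨c, rfl⟩ := Submodule.mem_span_singleton.mp hx
    rw [apply_smul_left]
    have : Form.apply M v y = 0 := by
      refine vanish_form_span (fun N hN => ?_) M hM
      simp only [Set.mem_insert_iff, Set.mem_singleton_iff] at hN
      rcases hN with rfl | rfl | rfl
      · exact apply_left_ker hs0 hk0 y
      · exact apply_left_ker hs1 hk1 y
      · exact apply_left_ker hs2 hk2 y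
    rw [this, mul_zero]

/-- dot product with a fixed covector, as a linear map. -/
def dotLin (c : W) : W →ₗ[ℂ] ℂ where
  toFun w := c ⬝ᵥ w
  map_add' a b := dotProduct_add c a b
  map_smul' r a := by simp [dotProduct_smul]

@[simp] lemma dotLin_apply (c w : W) : dotLin c w = c ⬝ᵥ w := rfl

lemma finrank_ker_dotLin (c : W) : 5 ≤ Module.finrank ℂ (LinearMap.ker (dotLin c)) := by
  have h1 := LinearMap.finrank_range_add_finrank_ker (dotLin c)
  have h2 : Module.finrank ℂ (LinearMap.range (dotLin c)) ≤ 1 := by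
    simpa using Submodule.finrank_le (LinearMap.range (dotLin c))
  have h6 : Module.finrank ℂ W = 6 := by simp
  omega

lemma finrank_inf_ge (p q : Submodule ℂ W) :
    Module.finrank ℂ p + Module.finrank ℂ q ≤ 6 + Module.finrank ℂ (p ⊓ q : Submodule ℂ W) := by
  have h1 := Submodule.finrank_sup_add_finrank_inf_eq p q
  have h2 : Module.finrank ℂ (p ⊔ q : Submodule ℂ W) ≤ 6 := by
    have := Submodule.finrank_le (p ⊔ q : Submodule ℂ W)
    simpa using this
  omega

lemma ker_dot_dependent {c d : W} {α β : ℂ} (h : α • c + β • d = 0) (hβ : ¬(α = 0 ∧ β = 0)) :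
    5 ≤ Module.finrank ℂ ((LinearMap.ker (dotLin c) ⊓ LinearMap.ker (dotLin d) : Submodule ℂ W)) := by
  by_cases hb : β = 0
  · have ha : α ≠ 0 := fun h0 => hβ ⟨h0, hb⟩
    have hc : c = 0 := by
      have : α • c = 0 := by rw [hb] at h; simpa using h
      exact (smul_eq_zero.mp this).resolve_left ha
    have : LinearMap.ker (dotLin d) ≤ LinearMap.ker (dotLin c) := by
      intro w _
      simp [LinearMap.mem_ker, hc]
    rw [inf_of_le_right this]
    exact finrank_ker_dotLin d
  · have : LinearMap.ker (dotLin c) ≤ LinearMap.ker (dotLin d) := by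
      intro w hw
      rw [LinearMap.mem_ker] at hw ⊢
      have hd : d = (-(β⁻¹ * α)) • c := by
        have h1 : β • d = -(α • c) := by
          have := congrArg (fun z => z - α • c) h
          simpa [sub_eq_add_neg, add_comm] using this
        have h2 : β⁻¹ • (β • d) = β⁻¹ • (-(α • c)) := by rw [h1]
        rw [smul_smul, inv_mul_cancel₀ hb, one_smul] at h2
        rw [h2, smul_neg, smul_smul]
        simp [neg_smul]
      rw [dotLin_apply, hd]
      simp only [smul_dotProduct, smul_eq_mul]
      rw [show c ⬝ᵥ w = 0 from hw]
      ring
    rw [inf_of_le_left this]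
    exact finrank_ker_dotLin c

lemma apply_eq_comm (N : Form) (x y : W) : Form.apply N x y = (N *ᵥ y) ⬝ᵥ x := by
  rw [Form.apply, dotProduct_comm]

/-- the degenerate (dependent) case: `v2 = α•v0 + β•v1`. -/
lemma dep2 (M0 M1 M2 : Form) (hs0 : M0.IsSkew) (hs1 : M1.IsSkew) (hs2 : M2.IsSkew)
    (v0 v1 v2 : W) (hv0 : v0 ≠ 0) (hv1 : v1 ≠ 0) (hv2 : v2 ≠ 0)
    (hk0 : M0 *ᵥ v0 = 0) (hk1 : M1 *ᵥ v1 = 0) (hk2 : M2 *ᵥ v2 = 0)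
    (hall : ∀ N ∈ ({M0, M1, M2} : Set Form), ∀ x ∈ ({v0, v1, v2} : Set W),
      ∀ y ∈ ({v0, v1, v2} : Set W), Form.apply N x y = 0)
    (α β : ℂ) (hrel : v2 = α • v0 + β • v1) :
    Nonstable (Submodule.span ℂ {M0, M1, M2}) := by
  by_cases hLI : LinearIndependent ℂ ![v0, v1]
  · -- main case : find w extending the plane ⟨v0, v1⟩
    have hab : ¬(α = 0 ∧ β = 0) := by
      rintro ⟨rfl, rfl⟩
      apply hv2
      rw [hrel]; simp
    have hrel2 : α • (M2 *ᵥ v0) + β • (M2 *ᵥ v1) = 0 := by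
      rw [← Matrix.mulVec_smul, ← Matrix.mulVec_smul, ← Matrix.mulVec_add, ← hrel, hk2]
    set Z : Submodule ℂ W :=
      (LinearMap.ker (dotLin (M0 *ᵥ v1)) ⊓ LinearMap.ker (dotLin (M1 *ᵥ v0))) ⊓
      (LinearMap.ker (dotLin (M2 *ᵥ v0)) ⊓ LinearMap.ker (dotLin (M2 *ᵥ v1))) with hZ
    have hZ3 : 3 ≤ Module.finrank ℂ Z := by
      have i1 := finrank_ker_dotLin (M0 *ᵥ v1)
      have i2 := finrank_ker_dotLin (M1 *ᵥ v0)
      have i3 := ker_dot_dependent hrel2 hab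
      have j1 := finrank_inf_ge (LinearMap.ker (dotLin (M0 *ᵥ v1))) (LinearMap.ker (dotLin (M1 *ᵥ v0)))
      have j2 := finrank_inf_ge
        ((LinearMap.ker (dotLin (M0 *ᵥ v1)) ⊓ LinearMap.ker (dotLin (M1 *ᵥ v0))) : Submodule ℂ W)
        ((LinearMap.ker (dotLin (M2 *ᵥ v0)) ⊓ LinearMap.ker (dotLin (M2 *ᵥ v1))) : Submodule ℂ W)
      rw [← hZ] at j2
      omega
    have haux : ∀ N ∈ ({M0, M1, M2} : Set Form), ∀ x ∈ ({v0, v1, v2} : Set W),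
        ∀ y ∈ ({v0, v1, v2} : Set W), (N *ᵥ y) ⬝ᵥ x = 0 := by
      intro N hN x hx y hy
      rw [← apply_eq_comm]
      exact hall N hN x hx y hy
    set S : Submodule ℂ W := Submodule.span ℂ (Set.range ![v0, v1]) with hS
    have hS2 : Module.finrank ℂ S = 2 := by simpa using finrank_span_eq_card hLI
    have hSZ : S ≤ Z := by
      rw [hS, Submodule.span_le]
      rintro x ⟨i, rfl⟩
      have hx : (![v0, v1] i) ∈ ({v0, v1, v2} : Set W) := by fin_cases i <;> simp
      simp only [hZ, Submodule.mem_inf, LinearMap.mem_ker, dotLin_apply, SetLike.mem_coe]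
      refine ⟨⟨?_, ?_⟩, ?_, ?_⟩
      · exact haux M0 (by simp) _ hx v1 (by simp)
      · exact haux M1 (by simp) _ hx v0 (by simp)
      · exact haux M2 (by simp) _ hx v0 (by simp)
      · exact haux M2 (by simp) _ hx v1 (by simp)
    have hSne : S ≠ Z := fun h => by rw [← h] at hZ3; omega
    obtain ⟨w, hwZ, hwS⟩ := SetLike.exists_of_lt (lt_of_le_of_ne hSZ hSne)
    obtain ⟨⟨hw01, hw10⟩, hw20, hw21⟩ :
        ((M0 *ᵥ v1) ⬝ᵥ w = 0 ∧ (M1 *ᵥ v0) ⬝ᵥ w = 0) ∧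
        ((M2 *ᵥ v0) ⬝ᵥ w = 0 ∧ (M2 *ᵥ v1) ⬝ᵥ w = 0) := by
      simpa only [hZ, Submodule.mem_inf, LinearMap.mem_ker, dotLin_apply] using hwZ
    have hLI3 : LinearIndependent ℂ ![w, v0, v1] := by
      rw [show (![w, v0, v1]) = Fin.cons w ![v0, v1] from rfl, linearIndependent_fin_cons]
      exact ⟨hLI, fun h => hwS (by rw [hS]; exact h)⟩
    -- the six `apply N w (v j) = 0` facts
    have hwv : ∀ N ∈ ({M0, M1, M2} : Set Form), ∀ y ∈ ({v0, v1} : Set W),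
        Form.apply N w y = 0 := by
      intro N hN y hy
      simp only [Set.mem_insert_iff, Set.mem_singleton_iff] at hN hy
      rcases hN with rfl | rfl | rfl <;> rcases hy with rfl | rfl
      · exact apply_right_ker N hk0 w
      · rw [apply_eq_comm]; exact hw01
      · rw [apply_eq_comm]; exact hw10
      · exact apply_right_ker N hk1 w
      · rw [apply_eq_comm]; exact hw20
      · rw [apply_eq_comm]; exact hw21
    apply nonstable_of_isotropic3 M0 M1 M2 ![w, v0, v1] hLI3
    intro N hN x hx y hy
    have hsN : N.IsSkew := by
      simp only [Set.mem_insert_iff, Set.mem_singleton_iff] at hN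
      rcases hN with rfl | rfl | rfl <;> assumption
    have hx' : x ∈ ({w, v0, v1} : Set W) := by
      obtain ⟨i, rfl⟩ := hx; fin_cases i <;> simp
    have hy' : y ∈ ({w, v0, v1} : Set W) := by
      obtain ⟨i, rfl⟩ := hy; fin_cases i <;> simp
    simp only [Set.mem_insert_iff, Set.mem_singleton_iff] at hx' hy'
    rcases hx' with rfl | hx'
    · rcases hy' with rfl | hy'
      · exact skew_apply_self hsN _
      · have : y ∈ ({v0, v1} : Set W) := by rcases hy' with rfl | rfl <;> simp
        exact hwv N hN y this
    · have hxm : x ∈ ({v0, v1} : Set W) := by rcases hx' with rfl | rfl <;> simp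
      rcases hy' with rfl | hy'
      · rw [skew_apply_swap hsN, hwv N hN x hxm, neg_zero]
      · have hym : y ∈ ({v0, v1} : Set W) := by rcases hy' with rfl | rfl <;> simp
        have m1 : x ∈ ({v0, v1, v2} : Set W) := by
          rcases hx' with rfl | rfl <;> simp
        have m2 : y ∈ ({v0, v1, v2} : Set W) := by
          rcases hy' with rfl | rfl <;> simp
        exact hall N hN x m1 y m2
  · -- degenerate case : v0 and v1 are parallel, common kernel vector
    obtain ⟨g, hgsum, i, hgi⟩ := Fintype.not_linearIndependent_iff.mp hLI
    have hgsum2 : g 0 • v0 + g 1 • v1 = 0 := by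
      simpa [Fin.sum_univ_two] using hgsum
    have hg1 : g 1 ≠ 0 := by
      intro h1
      have hg0 : g 0 ≠ 0 := by
        fin_cases i
        · exact hgi
        · exact absurd h1 hgi
      apply hv0
      rw [h1] at hgsum2
      simp only [zero_smul, add_zero] at hgsum2
      exact (smul_eq_zero.mp hgsum2).resolve_left hg0
    set μ : ℂ := -((g 1)⁻¹ * g 0) with hμ
    have hv1eq : v1 = μ • v0 := by
      have h2 : g 1 • v1 = -(g 0 • v0) := by
        have := congrArg (fun z => z - g 0 • v0) hgsum2
        simpa [sub_eq_add_neg, add_comm] using this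
      have h3 := congrArg (fun z => (g 1)⁻¹ • z) h2
      simp only [smul_smul, inv_mul_cancel₀ hg1, one_smul, smul_neg] at h3
      rw [h3, hμ]
      simp [smul_smul]
    have hμ0 : μ ≠ 0 := by
      intro h
      apply hv1
      rw [hv1eq, h, zero_smul]
    have hk1' : M1 *ᵥ v0 = 0 := by
      have : M1 *ᵥ v1 = μ • (M1 *ᵥ v0) := by rw [hv1eq, Matrix.mulVec_smul]
      rw [hk1] at this
      exact ((smul_eq_zero.mp this.symm).resolve_left hμ0)
    have hν : v2 = (α + β * μ) • v0 := by
      rw [hrel, hv1eq, smul_smul]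
      rw [← add_smul]
    have hν0 : α + β * μ ≠ 0 := by
      intro h
      apply hv2
      rw [hν, h, zero_smul]
    have hk2' : M2 *ᵥ v0 = 0 := by
      have : M2 *ᵥ v2 = (α + β * μ) • (M2 *ᵥ v0) := by rw [hν, Matrix.mulVec_smul]
      rw [hk2] at this
      exact ((smul_eq_zero.mp this.symm).resolve_left hν0)
    exact nonstable_of_common_kernel M0 M1 M2 hs0 hs1 hs2 hv0 hk0 hk1' hk2'

lemma solve_rel {a b c : W} {ga gb gc : ℂ} (h : ga • a + gb • b + gc • c = 0) (hc : gc ≠ 0) :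
    c = (-(gc⁻¹ * ga)) • a + (-(gc⁻¹ * gb)) • b := by
  have h1 : gc • c = -(ga • a) - gb • b := by
    calc gc • c = (ga • a + gb • b + gc • c) - ga • a - gb • b := by abel
    _ = 0 - ga • a - gb • b := by rw [h]
    _ = -(ga • a) - gb • b := by abel
  have h2 : gc⁻¹ • (gc • c) = gc⁻¹ • (-(ga • a) - gb • b) := by rw [h1]
  rw [smul_smul, inv_mul_cancel₀ hc, one_smul] at h2
  rw [h2, smul_sub, smul_neg, smul_smul, smul_smul]
  simp [neg_smul, sub_eq_add_neg]

set_option maxHeartbeats 1000000 in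
/-- The master lemma: any span of three skew forms of rank ≤ 4 is nonstable. -/
lemma master (M0 M1 M2 : Form)
    (hs0 : M0.IsSkew) (hs1 : M1.IsSkew) (hs2 : M2.IsSkew)
    (hr0 : M0.rank ≤ 4) (hr1 : M1.rank ≤ 4) (hr2 : M2.rank ≤ 4) :
    Nonstable (Submodule.span ℂ {M0, M1, M2}) := by
  obtain ⟨v0, v1, v2, hv0, hv1, hv2, hk0, hk1, hk2, hc0, hc1, hc2⟩ := pack hr0 hr1 hr2
  have hall : ∀ N ∈ ({M0, M1, M2} : Set Form), ∀ x ∈ ({v0, v1, v2} : Set W),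
      ∀ y ∈ ({v0, v1, v2} : Set W), Form.apply N x y = 0 := by
    intro N hN x hx y hy
    simp only [Set.mem_insert_iff, Set.mem_singleton_iff] at hN hx hy
    rcases hN with rfl | rfl | rfl
    · rcases hx with rfl | rfl | rfl
      · rcases hy with rfl | rfl | rfl
        · exact skew_apply_self hs0 _
        · exact apply_left_ker hs0 hk0 _
        · exact apply_left_ker hs0 hk0 _
      · rcases hy with rfl | rfl | rfl
        · exact apply_right_ker _ hk0 _
        · exact skew_apply_self hs0 _
        · exact hc0
      · rcases hy with rfl | rfl | rfl
        · exact apply_right_ker _ hk0 _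
        · rw [skew_apply_swap hs0, hc0, neg_zero]
        · exact skew_apply_self hs0 _
    · rcases hx with rfl | rfl | rfl
      · rcases hy with rfl | rfl | rfl
        · exact skew_apply_self hs1 _
        · exact apply_right_ker _ hk1 _
        · exact hc1
      · rcases hy with rfl | rfl | rfl
        · exact apply_left_ker hs1 hk1 _
        · exact skew_apply_self hs1 _
        · exact apply_left_ker hs1 hk1 _
      · rcases hy with rfl | rfl | rfl
        · rw [skew_apply_swap hs1, hc1, neg_zero]
        · exact apply_right_ker _ hk1 _
        · exact skew_apply_self hs1 _
    · rcases hx with rfl | rfl | rfl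
      · rcases hy with rfl | rfl | rfl
        · exact skew_apply_self hs2 _
        · exact hc2
        · exact apply_right_ker _ hk2 _
      · rcases hy with rfl | rfl | rfl
        · rw [skew_apply_swap hs2, hc2, neg_zero]
        · exact skew_apply_self hs2 _
        · exact apply_right_ker _ hk2 _
      · rcases hy with rfl | rfl | rfl
        · exact apply_left_ker hs2 hk2 _
        · exact apply_left_ker hs2 hk2 _
        · exact skew_apply_self hs2 _
  by_cases hLI : LinearIndependent ℂ ![v0, v1, v2]
  · apply nonstable_of_isotropic3 M0 M1 M2 ![v0, v1, v2] hLI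
    intro N hN x hx y hy
    have hx' : x ∈ ({v0, v1, v2} : Set W) := by
      obtain ⟨i, rfl⟩ := hx; fin_cases i <;> simp
    have hy' : y ∈ ({v0, v1, v2} : Set W) := by
      obtain ⟨i, rfl⟩ := hy; fin_cases i <;> simp
    exact hall N hN x hx' y hy'
  · obtain ⟨g, hgsum, i, hgi⟩ := Fintype.not_linearIndependent_iff.mp hLI
    have hsum3 : g 0 • v0 + g 1 • v1 + g 2 • v2 = 0 := by
      simpa [Fin.sum_univ_three] using hgsum
    fin_cases i
    · -- g 0 ≠ 0 : v0 = combination of v1, v2 ; permute to (M1, M2, M0)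
      have h' : g 1 • v1 + g 2 • v2 + g 0 • v0 = 0 := by rw [← hsum3]; abel
      have hrel := solve_rel h' hgi
      have hsetM : ({M0, M1, M2} : Set Form) = ({M1, M2, M0} : Set Form) := by
        ext x; simp only [Set.mem_insert_iff, Set.mem_singleton_iff]; tauto
      have hsetv : ({v1, v2, v0} : Set W) = ({v0, v1, v2} : Set W) := by
        ext x; simp only [Set.mem_insert_iff, Set.mem_singleton_iff]; tauto
      rw [hsetM]
      refine dep2 M1 M2 M0 hs1 hs2 hs0 v1 v2 v0 hv1 hv2 hv0 hk1 hk2 hk0 ?_ _ _ hrel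
      intro N hN x hx y hy
      rw [hsetv] at hx hy
      rw [← hsetM] at hN
      exact hall N hN x hx y hy
    · -- g 1 ≠ 0 : permute to (M0, M2, M1)
      have h' : g 0 • v0 + g 2 • v2 + g 1 • v1 = 0 := by rw [← hsum3]; abel
      have hrel := solve_rel h' hgi
      have hsetM : ({M0, M1, M2} : Set Form) = ({M0, M2, M1} : Set Form) := by
        ext x; simp only [Set.mem_insert_iff, Set.mem_singleton_iff]; tauto
      have hsetv : ({v0, v2, v1} : Set W) = ({v0, v1, v2} : Set W) := by
        ext x; simp only [Set.mem_insert_iff, Set.mem_singleton_iff]; tauto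
      rw [hsetM]
      refine dep2 M0 M2 M1 hs0 hs2 hs1 v0 v2 v1 hv0 hv2 hv1 hk0 hk2 hk1 ?_ _ _ hrel
      intro N hN x hx y hy
      rw [hsetv] at hx hy
      rw [← hsetM] at hN
      exact hall N hN x hx y hy
    · -- g 2 ≠ 0 : no permutation needed
      have hrel := solve_rel hsum3 hgi
      exact dep2 M0 M1 M2 hs0 hs1 hs2 v0 v1 v2 hv0 hv1 hv2 hk0 hk1 hk2 hall _ _ hrel


/-- Corollary 3.10: there are no stable linear systems of generic rank
≤ 4 of (projective) dimension ≤ 2. -/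
theorem statement12 (A : Submodule ℂ Form) (hA : ∀ M ∈ A, Form.IsSkew M)
    (hdim : Module.finrank ℂ A ≤ 3)
    (hrk : ∀ M ∈ A, Matrix.rank M ≤ 4) :
    Nonstable A := by
  set n := Module.finrank ℂ A with hn
  let bas : Module.Basis (Fin n) ℂ A := Module.finBasis ℂ A
  set Mf : Fin 3 → Form := fun i => if h : (i : ℕ) < n then ((bas ⟨i, h⟩ : A) : Form) else 0
    with hMf
  have hmem : ∀ i, Mf i ∈ A := by
    intro i
    rw [hMf]
    by_cases h : (i : ℕ) < n
    · simp only [h, dif_pos]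
      exact (bas ⟨i, h⟩).2
    · simp only [h, dif_neg, not_false_iff]
      exact A.zero_mem
  have hAeq : A = Submodule.span ℂ {Mf 0, Mf 1, Mf 2} := by
    apply le_antisymm
    · have h1 : A = Submodule.map A.subtype ⊤ := by
        rw [Submodule.map_subtype_top]
      have h2 : (⊤ : Submodule ℂ A) = Submodule.span ℂ (Set.range bas) := bas.span_eq.symm
      rw [h1, h2, Submodule.map_span]
      apply Submodule.span_mono
      rintro x ⟨y, ⟨j, rfl⟩, rfl⟩
      have hj3 : (j : ℕ) < 3 := lt_of_lt_of_le j.isLt hdim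
      have hxe : A.subtype (bas j) = Mf ⟨j, hj3⟩ := by
        rw [hMf]
        simp only [Fin.isLt, dif_pos]
        congr
      rw [hxe]
      have : (⟨(j : ℕ), hj3⟩ : Fin 3) = 0 ∨ (⟨(j : ℕ), hj3⟩ : Fin 3) = 1 ∨
          (⟨(j : ℕ), hj3⟩ : Fin 3) = 2 := by omega
      rcases this with h | h | h <;> rw [h] <;> simp
    · rw [Submodule.span_le]
      rintro x (rfl | rfl | rfl)
      · exact hmem 0
      · exact hmem 1
      · exact hmem 2
  rw [hAeq]
  exact master (Mf 0) (Mf 1) (Mf 2)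
    (hA _ (hmem 0)) (hA _ (hmem 1)) (hA _ (hmem 2))
    (hrk _ (hmem 0)) (hrk _ (hmem 1)) (hrk _ (hmem 2))
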